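/- Let (h, v1, v2, P11, P12, P22) be a smooth solution of the one-dimensional homogeneous shear shallow water system, let s = log((P11 P22 − P12^2)/h^2), and let H : ℝ → ℝ be any continuously differentiable function. Then ∂t (h H(s)) + ∂x (h v1 H(s)) = 0. -/

import Mathlib

section helpers
variable {f g : ℝ × ℝ → ℝ} {p d : ℝ × ℝ}

lemma fd_add (hf : DifferentiableAt ℝ f p) (hg : DifferentiableAt ℝ g p) :
    fderiv ℝ (fun q => f q + g q) p d = fderiv ℝ f p d + fderiv ℝ g p d := by
  rw [fderiv_fun_add hf hg]; rfl

lemma fd_sub (hf : DifferentiableAt ℝ f p) (hg : DifferentiableAt ℝ g p) :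
    fderiv ℝ (fun q => f q - g q) p d = fderiv ℝ f p d - fderiv ℝ g p d := by
  rw [fderiv_fun_sub hf hg]; rfl

lemma fd_mul (hf : DifferentiableAt ℝ f p) (hg : DifferentiableAt ℝ g p) :
    fderiv ℝ (fun q => f q * g q) p d = fderiv ℝ f p d * g p + f p * fderiv ℝ g p d := by
  rw [fderiv_fun_mul hf hg]
  simp [ContinuousLinearMap.add_apply, smul_eq_mul]
  ring

lemma fd_cmul (c : ℝ) (hf : DifferentiableAt ℝ f p) :
    fderiv ℝ (fun q => c * f q) p d = c * fderiv ℝ f p d := by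
  rw [fderiv_const_mul hf c]; simp

lemma fd_sq (hf : DifferentiableAt ℝ f p) :
    fderiv ℝ (fun q => f q ^ 2) p d = 2 * f p * fderiv ℝ f p d := by
  have h2 : (fun q => f q ^ 2) = fun q => f q * f q := by ext q; ring
  rw [h2, fd_mul hf hf]; ring

lemma fd_comp (F : ℝ → ℝ) (hF : DifferentiableAt ℝ F (f p)) (hf : DifferentiableAt ℝ f p) :
    fderiv ℝ (fun q => F (f q)) p d = deriv F (f p) * fderiv ℝ f p d := by
  have h1 : fderiv ℝ (F ∘ f) p = (fderiv ℝ F (f p)).comp (fderiv ℝ f p) := fderiv_comp p hF hf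
  have h2 : ∀ r : ℝ, fderiv ℝ F (f p) r = r * deriv F (f p) := by
    intro r
    calc fderiv ℝ F (f p) r = fderiv ℝ F (f p) (r • (1:ℝ)) := by simp
    _ = r • (fderiv ℝ F (f p) 1) := by rw [map_smul]
    _ = r * deriv F (f p) := by rw [fderiv_apply_one_eq_deriv]; rfl
  show fderiv ℝ (F ∘ f) p d = _
  rw [h1, ContinuousLinearMap.comp_apply, h2]; ring

end helpers


/-- Partial derivative in the first (time) variable. -/
noncomputable def pdt (f : ℝ × ℝ → ℝ) (p : ℝ × ℝ) : ℝ := fderiv ℝ f p (1, 0)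

/-- Partial derivative in the second (space) variable. -/
noncomputable def pdx (f : ℝ × ℝ → ℝ) (p : ℝ × ℝ) : ℝ := fderiv ℝ f p (0, 1)

/-- For a smooth solution of the 1-D homogeneous shear shallow water system and any
continuously differentiable `H : ℝ → ℝ`, with `s = log((P11 P22 - P12^2)/h^2)`,
one has `∂t (h H(s)) + ∂x (h v1 H(s)) = 0`. -/
theorem ssw_hHs_conservation
    (Ω : Set (ℝ × ℝ)) (hΩ : IsOpen Ω) (g : ℝ) (hg : 0 < g)
    (h v1 v2 P11 P12 P22 : ℝ × ℝ → ℝ)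
    (hsm0 : ContDiffOn ℝ 1 h Ω) (hsm1 : ContDiffOn ℝ 1 v1 Ω)
    (hsm2 : ContDiffOn ℝ 1 v2 Ω) (hsm3 : ContDiffOn ℝ 1 P11 Ω)
    (hsm4 : ContDiffOn ℝ 1 P12 Ω) (hsm5 : ContDiffOn ℝ 1 P22 Ω)
    (hpos : ∀ p ∈ Ω, 0 < h p)
    (hP11pos : ∀ p ∈ Ω, 0 < P11 p)
    (hdet : ∀ p ∈ Ω, 0 < P11 p * P22 p - P12 p ^ 2)
    (eq1 : ∀ p ∈ Ω, pdt h p + pdx (fun q => h q * v1 q) p = 0)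
    (eq2 : ∀ p ∈ Ω, pdt (fun q => h q * v1 q) p
      + pdx (fun q => h q * (v1 q ^ 2 + P11 q)) p + g * h p * pdx h p = 0)
    (eq3 : ∀ p ∈ Ω, pdt (fun q => h q * v2 q) p
      + pdx (fun q => h q * (v1 q * v2 q + P12 q)) p = 0)
    (eq4 : ∀ p ∈ Ω, pdt (fun q => h q / 2 * (v1 q ^ 2 + P11 q)) p
      + pdx (fun q => h q / 2 * (v1 q * (v1 q ^ 2 + 3 * P11 q))) p
      + g * h p * v1 p * pdx h p = 0)
    (eq5 : ∀ p ∈ Ω, pdt (fun q => h q / 2 * (v1 q * v2 q + P12 q)) p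
      + pdx (fun q => h q / 2 * (v1 q ^ 2 * v2 q + 2 * v1 q * P12 q + v2 q * P11 q)) p
      + 1 / 2 * g * h p * v2 p * pdx h p = 0)
    (eq6 : ∀ p ∈ Ω, pdt (fun q => h q / 2 * (v2 q ^ 2 + P22 q)) p
      + pdx (fun q => h q / 2 * (v1 q * v2 q ^ 2 + 2 * v2 q * P12 q + v1 q * P22 q)) p = 0)
    (H : ℝ → ℝ) (hH : ContDiff ℝ 1 H) :
    ∀ p ∈ Ω,
      pdt (fun q => h q * H (Real.log ((P11 q * P22 q - P12 q ^ 2) / h q ^ 2))) p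
        + pdx (fun q => h q * v1 q * H (Real.log ((P11 q * P22 q - P12 q ^ 2) / h q ^ 2))) p
        = 0 := by
  intro p hp
  have mem : Ω ∈ nhds p := hΩ.mem_nhds hp
  have dh : DifferentiableAt ℝ h p := (hsm0.differentiableOn one_ne_zero).differentiableAt mem
  have du : DifferentiableAt ℝ v1 p := (hsm1.differentiableOn one_ne_zero).differentiableAt mem
  have dw : DifferentiableAt ℝ v2 p := (hsm2.differentiableOn one_ne_zero).differentiableAt mem
  have dP : DifferentiableAt ℝ P11 p := (hsm3.differentiableOn one_ne_zero).differentiableAt mem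
  have dQ : DifferentiableAt ℝ P12 p := (hsm4.differentiableOn one_ne_zero).differentiableAt mem
  have dR : DifferentiableAt ℝ P22 p := (hsm5.differentiableOn one_ne_zero).differentiableAt mem
  have hh0 : h p ≠ 0 := ne_of_gt (hpos p hp)
  have hd0 : P11 p * P22 p - P12 p ^ 2 ≠ 0 := ne_of_gt (hdet p hp)
  -- differentiability of composites
  have dA2 : DifferentiableAt ℝ (fun q => v1 q ^ 2 + P11 q) p := (du.pow 2).add dP
  have dA3 : DifferentiableAt ℝ (fun q => v1 q * v2 q + P12 q) p := (du.mul dw).add dQ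
  have dA4 : DifferentiableAt ℝ (fun q => v1 q * (v1 q ^ 2 + 3 * P11 q)) p :=
    du.mul ((du.pow 2).add (dP.const_mul 3))
  have dA5 : DifferentiableAt ℝ
      (fun q => v1 q ^ 2 * v2 q + 2 * v1 q * P12 q + v2 q * P11 q) p :=
    (((du.pow 2).mul dw).add (((du.const_mul 2)).mul dQ)).add (dw.mul dP)
  have dA6 : DifferentiableAt ℝ (fun q => v2 q ^ 2 + P22 q) p := (dw.pow 2).add dR
  have dA7 : DifferentiableAt ℝ
      (fun q => v1 q * v2 q ^ 2 + 2 * v2 q * P12 q + v1 q * P22 q) p :=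
    ((du.mul (dw.pow 2)).add (((dw.const_mul 2)).mul dQ)).add (du.mul dR)
  have ddet : DifferentiableAt ℝ (fun q => P11 q * P22 q - P12 q ^ 2) p :=
    (dP.mul dR).sub (dQ.pow 2)
  -- derivative expansions, for any direction d
  have Dg1 : ∀ d : ℝ × ℝ, fderiv ℝ (fun q => h q * v1 q) p d
      = fderiv ℝ h p d * v1 p + h p * fderiv ℝ v1 p d := fun d => fd_mul dh du
  have Dg1' : ∀ d : ℝ × ℝ, fderiv ℝ (fun q => h q * v2 q) p d
      = fderiv ℝ h p d * v2 p + h p * fderiv ℝ v2 p d := fun d => fd_mul dh dw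
  have DA2 : ∀ d : ℝ × ℝ, fderiv ℝ (fun q => v1 q ^ 2 + P11 q) p d
      = 2 * v1 p * fderiv ℝ v1 p d + fderiv ℝ P11 p d := fun d => by
    rw [fd_add (du.fun_pow 2) dP, fd_sq du]
  have Dg2 : ∀ d : ℝ × ℝ, fderiv ℝ (fun q => h q * (v1 q ^ 2 + P11 q)) p d
      = fderiv ℝ h p d * (v1 p ^ 2 + P11 p)
        + h p * (2 * v1 p * fderiv ℝ v1 p d + fderiv ℝ P11 p d) := fun d => by
    rw [fd_mul dh dA2, DA2 d]
  have DA3 : ∀ d : ℝ × ℝ, fderiv ℝ (fun q => v1 q * v2 q + P12 q) p d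
      = (fderiv ℝ v1 p d * v2 p + v1 p * fderiv ℝ v2 p d) + fderiv ℝ P12 p d := fun d => by
    rw [fd_add (du.fun_mul dw) dQ, fd_mul du dw]
  have Dg3 : ∀ d : ℝ × ℝ, fderiv ℝ (fun q => h q * (v1 q * v2 q + P12 q)) p d
      = fderiv ℝ h p d * (v1 p * v2 p + P12 p)
        + h p * ((fderiv ℝ v1 p d * v2 p + v1 p * fderiv ℝ v2 p d) + fderiv ℝ P12 p d) :=
    fun d => by rw [fd_mul dh dA3, DA3 d]
  have DA4 : ∀ d : ℝ × ℝ, fderiv ℝ (fun q => v1 q * (v1 q ^ 2 + 3 * P11 q)) p d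
      = fderiv ℝ v1 p d * (v1 p ^ 2 + 3 * P11 p)
        + v1 p * (2 * v1 p * fderiv ℝ v1 p d + 3 * fderiv ℝ P11 p d) := fun d => by
    rw [fd_mul du ((du.fun_pow 2).fun_add (dP.const_mul 3)), fd_add (du.fun_pow 2) (dP.const_mul 3),
      fd_sq du, fd_cmul 3 dP]
  have DA5 : ∀ d : ℝ × ℝ, fderiv ℝ
      (fun q => v1 q ^ 2 * v2 q + 2 * v1 q * P12 q + v2 q * P11 q) p d
      = ((2 * v1 p * fderiv ℝ v1 p d * v2 p + v1 p ^ 2 * fderiv ℝ v2 p d)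
          + (2 * fderiv ℝ v1 p d * P12 p + 2 * v1 p * fderiv ℝ P12 p d))
        + (fderiv ℝ v2 p d * P11 p + v2 p * fderiv ℝ P11 p d) := fun d => by
    rw [fd_add (((du.fun_pow 2).fun_mul dw).fun_add ((du.const_mul 2).fun_mul dQ)) (dw.fun_mul dP),
      fd_add ((du.fun_pow 2).fun_mul dw) ((du.const_mul 2).fun_mul dQ),
      fd_mul (du.fun_pow 2) dw, fd_sq du, fd_mul (du.const_mul 2) dQ, fd_cmul 2 du,
      fd_mul dw dP]
  have DA6 : ∀ d : ℝ × ℝ, fderiv ℝ (fun q => v2 q ^ 2 + P22 q) p d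
      = 2 * v2 p * fderiv ℝ v2 p d + fderiv ℝ P22 p d := fun d => by
    rw [fd_add (dw.fun_pow 2) dR, fd_sq dw]
  have DA7 : ∀ d : ℝ × ℝ, fderiv ℝ
      (fun q => v1 q * v2 q ^ 2 + 2 * v2 q * P12 q + v1 q * P22 q) p d
      = ((fderiv ℝ v1 p d * v2 p ^ 2 + v1 p * (2 * v2 p * fderiv ℝ v2 p d))
          + (2 * fderiv ℝ v2 p d * P12 p + 2 * v2 p * fderiv ℝ P12 p d))
        + (fderiv ℝ v1 p d * P22 p + v1 p * fderiv ℝ P22 p d) := fun d => by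
    rw [fd_add ((du.fun_mul (dw.fun_pow 2)).fun_add ((dw.const_mul 2).fun_mul dQ)) (du.fun_mul dR),
      fd_add (du.fun_mul (dw.fun_pow 2)) ((dw.const_mul 2).fun_mul dQ),
      fd_mul du (dw.fun_pow 2), fd_sq dw, fd_mul (dw.const_mul 2) dQ, fd_cmul 2 dw,
      fd_mul du dR]
  -- convert the six equations
  have e1 := eq1 p hp
  have e2 := eq2 p hp
  have e3 := eq3 p hp
  have e4 := eq4 p hp
  have e5 := eq5 p hp
  have e6 := eq6 p hp
  simp only [pdt, pdx] at e1 e2 e3 e4 e5 e6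
  rw [Dg1] at e1
  rw [Dg1, Dg2] at e2
  rw [Dg1', Dg3] at e3
  have hr2 : (fun q => h q / 2 * (v1 q ^ 2 + P11 q))
      = (fun q => (1/2 : ℝ) * (h q * (v1 q ^ 2 + P11 q))) := by funext q; ring
  have hr4 : (fun q => h q / 2 * (v1 q * (v1 q ^ 2 + 3 * P11 q)))
      = (fun q => (1/2 : ℝ) * (h q * (v1 q * (v1 q ^ 2 + 3 * P11 q)))) := by funext q; ring
  have hr3 : (fun q => h q / 2 * (v1 q * v2 q + P12 q))
      = (fun q => (1/2 : ℝ) * (h q * (v1 q * v2 q + P12 q))) := by funext q; ring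
  have hr5 : (fun q => h q / 2 * (v1 q ^ 2 * v2 q + 2 * v1 q * P12 q + v2 q * P11 q))
      = (fun q => (1/2 : ℝ) * (h q * (v1 q ^ 2 * v2 q + 2 * v1 q * P12 q + v2 q * P11 q))) := by
    funext q; ring
  have hr6 : (fun q => h q / 2 * (v2 q ^ 2 + P22 q))
      = (fun q => (1/2 : ℝ) * (h q * (v2 q ^ 2 + P22 q))) := by funext q; ring
  have hr7 : (fun q => h q / 2 * (v1 q * v2 q ^ 2 + 2 * v2 q * P12 q + v1 q * P22 q))
      = (fun q => (1/2 : ℝ) * (h q * (v1 q * v2 q ^ 2 + 2 * v2 q * P12 q + v1 q * P22 q))) := by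
    funext q; ring
  rw [hr2, hr4, fd_cmul (1/2) (dh.fun_mul dA2), fd_cmul (1/2) (dh.fun_mul dA4),
    fd_mul dh dA2, fd_mul dh dA4, DA2, DA4] at e4
  rw [hr3, hr5, fd_cmul (1/2) (dh.fun_mul dA3), fd_cmul (1/2) (dh.fun_mul dA5),
    fd_mul dh dA3, fd_mul dh dA5, DA3, DA5] at e5
  rw [hr6, hr7, fd_cmul (1/2) (dh.fun_mul dA6), fd_cmul (1/2) (dh.fun_mul dA7),
    fd_mul dh dA6, fd_mul dh dA7, DA6, DA7] at e6
  -- goal side: replace log(det/h^2) by log det - 2 log h near p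
  have hev1 : (fun q => h q * H (Real.log ((P11 q * P22 q - P12 q ^ 2) / h q ^ 2)))
      =ᶠ[nhds p] (fun q => h q * H (Real.log (P11 q * P22 q - P12 q ^ 2) - 2 * Real.log (h q))) := by
    filter_upwards [mem] with q hq
    rw [Real.log_div (ne_of_gt (hdet q hq)) (pow_ne_zero 2 (ne_of_gt (hpos q hq))),
      Real.log_pow]
    norm_num
  have hev2 : (fun q => h q * v1 q * H (Real.log ((P11 q * P22 q - P12 q ^ 2) / h q ^ 2)))
      =ᶠ[nhds p] (fun q => h q * v1 q
        * H (Real.log (P11 q * P22 q - P12 q ^ 2) - 2 * Real.log (h q))) := by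
    filter_upwards [mem] with q hq
    rw [Real.log_div (ne_of_gt (hdet q hq)) (pow_ne_zero 2 (ne_of_gt (hpos q hq))),
      Real.log_pow]
    norm_num
  have dlogdet : DifferentiableAt ℝ (fun q => Real.log (P11 q * P22 q - P12 q ^ 2)) p :=
    ddet.log hd0
  have dst : DifferentiableAt ℝ
      (fun q => Real.log (P11 q * P22 q - P12 q ^ 2) - 2 * Real.log (h q)) p :=
    dlogdet.sub ((dh.log hh0).const_mul 2)
  have dHd : DifferentiableAt ℝ H
      (Real.log (P11 p * P22 p - P12 p ^ 2) - 2 * Real.log (h p)) :=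
    (hH.differentiable one_ne_zero).differentiableAt
  have dHs : DifferentiableAt ℝ
      (fun q => H (Real.log (P11 q * P22 q - P12 q ^ 2) - 2 * Real.log (h q))) p :=
    DifferentiableAt.comp p dHd dst
  have Ddet : ∀ d : ℝ × ℝ, fderiv ℝ (fun q => P11 q * P22 q - P12 q ^ 2) p d
      = (fderiv ℝ P11 p d * P22 p + P11 p * fderiv ℝ P22 p d)
        - 2 * P12 p * fderiv ℝ P12 p d := fun d => by
    rw [fd_sub (dP.fun_mul dR) (dQ.fun_pow 2), fd_mul dP dR, fd_sq dQ]
  have Dst : ∀ d : ℝ × ℝ, fderiv ℝ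
      (fun q => Real.log (P11 q * P22 q - P12 q ^ 2) - 2 * Real.log (h q)) p d
      = (P11 p * P22 p - P12 p ^ 2)⁻¹
          * ((fderiv ℝ P11 p d * P22 p + P11 p * fderiv ℝ P22 p d)
            - 2 * P12 p * fderiv ℝ P12 p d)
        - 2 * ((h p)⁻¹ * fderiv ℝ h p d) := fun d => by
    rw [fd_sub dlogdet ((dh.log hh0).const_mul 2), fd_cmul 2 (dh.log hh0),
      fd_comp Real.log (Real.differentiableAt_log hd0) ddet,
      fd_comp Real.log (Real.differentiableAt_log hh0) dh,
      Real.deriv_log, Real.deriv_log, Ddet]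
  have DHs : ∀ d : ℝ × ℝ, fderiv ℝ
      (fun q => H (Real.log (P11 q * P22 q - P12 q ^ 2) - 2 * Real.log (h q))) p d
      = deriv H (Real.log (P11 p * P22 p - P12 p ^ 2) - 2 * Real.log (h p))
        * fderiv ℝ (fun q => Real.log (P11 q * P22 q - P12 q ^ 2) - 2 * Real.log (h q)) p d :=
    fun d => fd_comp H dHd dst
  have DF1 : ∀ d : ℝ × ℝ, fderiv ℝ
      (fun q => h q * H (Real.log (P11 q * P22 q - P12 q ^ 2) - 2 * Real.log (h q))) p d
      = fderiv ℝ h p d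
          * H (Real.log (P11 p * P22 p - P12 p ^ 2) - 2 * Real.log (h p))
        + h p * (deriv H (Real.log (P11 p * P22 p - P12 p ^ 2) - 2 * Real.log (h p))
          * fderiv ℝ (fun q => Real.log (P11 q * P22 q - P12 q ^ 2) - 2 * Real.log (h q)) p d) :=
    fun d => by rw [fd_mul dh dHs, DHs d]
  have DF2 : ∀ d : ℝ × ℝ, fderiv ℝ
      (fun q => h q * v1 q
        * H (Real.log (P11 q * P22 q - P12 q ^ 2) - 2 * Real.log (h q))) p d
      = (fderiv ℝ h p d * v1 p + h p * fderiv ℝ v1 p d)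
          * H (Real.log (P11 p * P22 p - P12 p ^ 2) - 2 * Real.log (h p))
        + h p * v1 p * (deriv H (Real.log (P11 p * P22 p - P12 p ^ 2) - 2 * Real.log (h p))
          * fderiv ℝ (fun q => Real.log (P11 q * P22 q - P12 q ^ 2) - 2 * Real.log (h q)) p d) :=
    fun d => by rw [fd_mul (dh.fun_mul du) dHs, DHs d, Dg1 d]
  simp only [pdt, pdx]
  rw [hev1.fderiv_eq, hev2.fderiv_eq, DF1, DF2, Dst, Dst]
  set h0 := h p
  set u0 := v1 p
  set w0 := v2 p
  set p0 := P11 p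
  set q0 := P12 p
  set r0 := P22 p
  set a := fderiv ℝ h p (1, 0)
  set b := fderiv ℝ h p (0, 1)
  set ut := fderiv ℝ v1 p (1, 0)
  set ux := fderiv ℝ v1 p (0, 1)
  set wt := fderiv ℝ v2 p (1, 0)
  set wx := fderiv ℝ v2 p (0, 1)
  set pt := fderiv ℝ P11 p (1, 0)
  set px := fderiv ℝ P11 p (0, 1)
  set qt := fderiv ℝ P12 p (1, 0)
  set qx := fderiv ℝ P12 p (0, 1)
  set rt := fderiv ℝ P22 p (1, 0)
  set rx := fderiv ℝ P22 p (0, 1)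
  have keyP : h0 * ((pt + u0*px)*r0 + p0*(rt + u0*rx) - 2*q0*(qt + u0*qx)
      + 2*(p0*r0 - q0^2)*ux) = 0 := by
    linear_combination (2*r0)*e4 + (2*p0)*e6 - (4*q0)*e5 + (2*q0*w0 - 2*r0*u0)*e2
      + (2*q0*u0 - 2*p0*w0)*e3
      + (r0*(u0^2 - p0) + p0*(w0^2 - r0) - 2*q0*(u0*w0 - q0))*e1
  have hT : (pt + u0*px)*r0 + p0*(rt + u0*rx) - 2*q0*(qt + u0*qx)
      + 2*(p0*r0 - q0^2)*ux = 0 := by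
    rcases mul_eq_zero.mp keyP with h' | h'
    · exact absurd h' hh0
    · exact h'
  have hsum2 : pt*r0 + p0*rt - 2*q0*qt + u0*(px*r0 + p0*rx - 2*q0*qx)
      = -(2*(p0*r0 - q0^2)*ux) := by linear_combination hT
  have hab : a + u0*b = -(h0*ux) := by linear_combination e1
  have main : (p0*r0 - q0^2)⁻¹ * (pt*r0 + p0*rt - 2*q0*qt + u0*(px*r0 + p0*rx - 2*q0*qx))
      - 2*(h0⁻¹*(a + u0*b)) = 0 := by
    rw [hsum2, hab]
    field_simp
    ring
  linear_combination (H (Real.log (p0*r0 - q0^2) - 2*Real.log h0)) * e1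
    + (deriv H (Real.log (p0*r0 - q0^2) - 2*Real.log h0) * h0) * main
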